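/- Suppose z = p/q with p, q ∈ 𝒪 and q ≠ 0. Then every run of the continued fraction algorithm on input z has finite length, and any run of finite length N satisfies ε^N·|q| ≥ 1 (equivalently, N ≤ log|q| / log(1/ε)); in particular, no infinite run on input z exists. -/

import Mathlib

noncomputable section

namespace CFNE

/-- τ = (Δ + i·√|Δ|)/2. -/
def tau (Δ : ℤ) : ℂ := ((Δ : ℂ) + Complex.I * (Real.sqrt |(Δ : ℝ)|)) / 2

/-- The imaginary quadratic order 𝒪 = ℤ[τ] of discriminant Δ, as a subring of ℂ. -/
def O (Δ : ℤ) : Subring ℂ := Subring.closure {tau Δ}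

/-- A (nonzero or zero) ideal of 𝒪, presented as a subset of ℂ. -/
structure IdealS (Δ : ℤ) where
  carrier : Set ℂ
  subset : carrier ⊆ (O Δ : Set ℂ)
  zero_mem : (0 : ℂ) ∈ carrier
  add_mem : ∀ x ∈ carrier, ∀ y ∈ carrier, x + y ∈ carrier
  neg_mem : ∀ x ∈ carrier, -x ∈ carrier
  smul_mem : ∀ r ∈ (O Δ : Set ℂ), ∀ x ∈ carrier, r * x ∈ carrier

/-- The ideal as an additive subgroup of ℂ. -/
def IdealS.toAddSubgroup {Δ : ℤ} (I : IdealS Δ) : AddSubgroup ℂ where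
  carrier := I.carrier
  zero_mem' := I.zero_mem
  add_mem' := fun hx hy => I.add_mem _ hx _ hy
  neg_mem' := fun hx => I.neg_mem _ hx

/-- The norm of an ideal: the index [𝒪 : 𝔟]. -/
def IdealS.norm {Δ : ℤ} (I : IdealS Δ) : ℕ :=
  I.toAddSubgroup.relIndex (O Δ).toAddSubgroup

/-- The ideal is nonzero. -/
def IdealS.Nonzero {Δ : ℤ} (I : IdealS Δ) : Prop := ∃ x ∈ I.carrier, x ≠ 0

/-- Two nonzero ideals lie in the same class if x·𝔞 = y·𝔟 for some nonzero x, y ∈ 𝒪. -/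
def SameClass {Δ : ℤ} (I J : IdealS Δ) : Prop :=
  ∃ x ∈ (O Δ : Set ℂ), ∃ y ∈ (O Δ : Set ℂ), x ≠ 0 ∧ y ≠ 0 ∧
    (fun t => x * t) '' I.carrier = (fun t => y * t) '' J.carrier

/-- A reduced ideal: a nonzero ideal of minimal norm in its ideal class. -/
def IsReduced {Δ : ℤ} (I : IdealS Δ) : Prop :=
  I.Nonzero ∧ ∀ J : IdealS Δ, J.Nonzero → SameClass I J → I.norm ≤ J.norm

/-- The inverse fractional ideal 𝔟⁻¹ = {x ∈ ℂ : x·𝔟 ⊆ 𝒪}. -/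
def invSet {Δ : ℤ} (I : IdealS Δ) : Set ℂ :=
  {x : ℂ | ∀ y ∈ I.carrier, x * y ∈ (O Δ : Set ℂ)}

/-- The fractional ideal a·𝔟 + b·𝔟⁻¹, as a subset of ℂ. -/
def combSet {Δ : ℤ} (I : IdealS Δ) (a b : ℂ) : Set ℂ :=
  {u : ℂ | ∃ s ∈ I.carrier, ∃ t ∈ invSet I, u = a * s + b * t}

/-- The ideal x·𝒪 + y·𝒪 of 𝒪 generated by x and y, as a subset of ℂ. -/
def genSet (Δ : ℤ) (x y : ℂ) : Set ℂ :=
  {u : ℂ | ∃ s ∈ (O Δ : Set ℂ), ∃ t ∈ (O Δ : Set ℂ), u = x * s + y * t}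

/-- The set is the carrier of a reduced ideal of 𝒪. -/
def IsReducedSet (Δ : ℤ) (S : Set ℂ) : Prop :=
  ∃ J : IdealS Δ, IsReduced J ∧ J.carrier = S

/-- B is admissible with ε ∈ (0,1): B is a nonempty finite subset of 𝒪 ∖ {0}, and for every
reduced ideal 𝔟 with 𝔟 ∩ B ≠ ∅, the discs D(a/b, ε/|b|) over b ∈ 𝔟 ∩ B, a ∈ 𝔟⁻¹ with
a·𝔟 + b·𝔟⁻¹ reduced, cover ℂ. -/
def Admissible (Δ : ℤ) (B : Set ℂ) (ε : ℝ) : Prop :=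
  B.Nonempty ∧ B.Finite ∧ B ⊆ (O Δ : Set ℂ) ∧ (0 : ℂ) ∉ B ∧
  ∀ I : IdealS Δ, IsReduced I → (I.carrier ∩ B).Nonempty →
    ∀ z : ℂ, ∃ b ∈ I.carrier ∩ B, ∃ a ∈ invSet I,
      IsReducedSet Δ (combSet I a b) ∧ ‖z - a / b‖ ≤ ε / ‖b‖

/-- μ = max{|b| : b ∈ B}. -/
def mu (B : Set ℂ) : ℝ := sSup ((fun w : ℂ => ‖w‖) '' B)

/-- A run of the continued fraction algorithm of length N ∈ ℕ ∪ {∞} on input z. -/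
structure Run (Δ : ℤ) (B : Set ℂ) (ε : ℝ) (z : ℂ) (N : ℕ∞) where
  a : ℤ → ℂ
  b : ℤ → ℂ
  p : ℤ → ℂ
  q : ℤ → ℂ
  zs : ℤ → ℂ
  b_zero : b 0 = 1
  p_neg_one : p (-1) = 0
  q_neg_one : q (-1) = 1
  p_zero : p 0 = 1
  q_zero : q 0 = 0
  zs_zero : zs 0 = z
  ha : ∀ n : ℕ, 1 ≤ n → (n : ℕ∞) ≤ N → a n ∈ O Δ
  hb : ∀ n : ℕ, 1 ≤ n → (n : ℕ∞) ≤ N → b n ∈ B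
  hne : ∀ n : ℕ, 1 ≤ n → (n : ℕ∞) ≤ N → b n * zs ((n : ℤ) - 1) - a n ≠ 0
  hclose : ∀ n : ℕ, 1 ≤ n → (n : ℕ∞) ≤ N →
    ‖b n * zs ((n : ℤ) - 1) - a n‖ ≤ ε * ‖b ((n : ℤ) - 1)‖
  hp : ∀ n : ℕ, 1 ≤ n → (n : ℕ∞) ≤ N →
    p n = (a n * p ((n : ℤ) - 1) + b n * p ((n : ℤ) - 2)) / b ((n : ℤ) - 1)
  hq : ∀ n : ℕ, 1 ≤ n → (n : ℕ∞) ≤ N →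
    q n = (a n * q ((n : ℤ) - 1) + b n * q ((n : ℤ) - 2)) / b ((n : ℤ) - 1)
  hz : ∀ n : ℕ, 1 ≤ n → (n : ℕ∞) ≤ N →
    zs n = b ((n : ℤ) - 1) / (b n * zs ((n : ℤ) - 1) - a n)
  hpO : ∀ n : ℕ, 1 ≤ n → (n : ℕ∞) ≤ N → p n ∈ O Δ
  hqO : ∀ n : ℕ, 1 ≤ n → (n : ℕ∞) ≤ N → q n ∈ O Δ
  hred : ∀ n : ℕ, 1 ≤ n → (n : ℕ∞) ≤ N → IsReducedSet Δ (genSet Δ (p n) (q n))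


lemma tau_sq (Δ : ℤ) (hΔneg : Δ < 0) {k : ℤ} (hk : 4 * k = Δ * (Δ - 1)) :
    tau Δ ^ 2 = Δ * tau Δ - k := by
  have hs : (Real.sqrt |(Δ : ℝ)| : ℂ) ^ 2 = (-Δ : ℝ) := by
    rw [← Complex.ofReal_pow, Real.sq_sqrt (abs_nonneg _), abs_of_neg (by exact_mod_cast hΔneg)]
  have hk' : (k : ℂ) * 4 = Δ * (Δ - 1) := by exact_mod_cast (by linarith : k * 4 = Δ * (Δ-1))
  have hs' : (Real.sqrt |(Δ : ℝ)| : ℂ) ^ 2 = -(Δ : ℂ) := by push_cast at hs ⊢; exact hs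
  have hI : (Complex.I) ^ 2 = -1 := Complex.I_sq
  unfold tau
  linear_combination (-1/4 : ℂ) * hs' + ((Real.sqrt |(Δ : ℝ)| : ℂ)^2/4) * hI + (1/4 : ℂ) * hk'

lemma mem_O (Δ : ℤ) (hΔneg : Δ < 0) {k : ℤ} (hk : 4 * k = Δ * (Δ - 1)) {x : ℂ}
    (hx : x ∈ O Δ) : ∃ m n : ℤ, x = m + n * tau Δ := by
  have hts := tau_sq Δ hΔneg hk
  induction hx using Subring.closure_induction with
  | mem y hy =>
    rcases hy with rfl
    exact ⟨0, 1, by simp⟩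
  | zero => exact ⟨0, 0, by simp⟩
  | one => exact ⟨1, 0, by simp⟩
  | add x y _ _ hx hy =>
    obtain ⟨m, n, rfl⟩ := hx; obtain ⟨m', n', rfl⟩ := hy
    exact ⟨m + m', n + n', by push_cast; ring⟩
  | neg x _ hx =>
    obtain ⟨m, n, rfl⟩ := hx
    exact ⟨-m, -n, by push_cast; ring⟩
  | mul x y _ _ hx hy =>
    obtain ⟨m, n, rfl⟩ := hx; obtain ⟨m', n', rfl⟩ := hy
    refine ⟨m * m' - n * n' * k, m * n' + n * m' + n * n' * Δ, ?_⟩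
    push_cast
    linear_combination (n : ℂ) * n' * hts

lemma abs_one_le (Δ : ℤ) (hΔneg : Δ < 0) (hΔmod : Δ % 4 = 0 ∨ Δ % 4 = 1) {x : ℂ}
    (hx : x ∈ O Δ) (hx0 : x ≠ 0) : 1 ≤ ‖x‖ := by
  have hdvd : (4 : ℤ) ∣ Δ * (Δ - 1) := by
    rcases hΔmod with h | h
    · exact Dvd.dvd.mul_right (Int.dvd_of_emod_eq_zero h) _
    · exact Dvd.dvd.mul_left (by omega) _
  obtain ⟨k, hk⟩ := hdvd
  obtain ⟨m, n, rfl⟩ := mem_O Δ hΔneg hk.symm hx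
  have hs2 : (Real.sqrt |(Δ : ℝ)|) ^ 2 = (-Δ : ℝ) := by
    rw [Real.sq_sqrt (abs_nonneg _), abs_of_neg (by exact_mod_cast hΔneg)]
  have hre : ((m : ℂ) + n * tau Δ).re = m + n * Δ / 2 := by
    simp [tau, Complex.add_re, Complex.mul_re, Complex.div_re]
    ring
  have him : ((m : ℂ) + n * tau Δ).im = n * Real.sqrt |(Δ : ℝ)| / 2 := by
    simp [tau, Complex.add_im, Complex.mul_im, Complex.div_im]
    ring
  have hnsq : Complex.normSq ((m : ℂ) + n * tau Δ) = ((m^2 + m*n*Δ + n^2*k : ℤ) : ℝ) := by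
    rw [Complex.normSq_apply, hre, him]
    have hk' : ((k : ℝ)) * 4 = Δ * (Δ - 1) := by exact_mod_cast (by linarith : k * 4 = Δ * (Δ-1))
    push_cast
    nlinarith [hs2, hk']
  have hpos : 0 < Complex.normSq ((m : ℂ) + n * tau Δ) := Complex.normSq_pos.mpr hx0
  have h0 : (1 : ℝ) ≤ ((m^2 + m*n*Δ + n^2*k : ℤ) : ℝ) := by
    rw [hnsq] at hpos
    exact_mod_cast (by exact_mod_cast hpos : (0:ℤ) < m^2 + m*n*Δ + n^2*k)
  have h1 : 1 ≤ Complex.normSq ((m : ℂ) + n * tau Δ) := by rw [hnsq]; exact h0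
  nlinarith [Complex.sq_norm ((m : ℂ) + n * tau Δ),
    norm_nonneg ((m : ℂ) + n * tau Δ)]

theorem stmt3 (Δ : ℤ) (hΔneg : Δ < 0) (hΔmod : Δ % 4 = 0 ∨ Δ % 4 = 1)
    (B : Set ℂ) (ε : ℝ) (hε0 : 0 < ε) (hε1 : ε < 1) (hadm : Admissible Δ B ε)
    (p q : ℂ) (hp : p ∈ O Δ) (hq : q ∈ O Δ) (hq0 : q ≠ 0)
    (N : ℕ∞) (R : Run Δ B ε (p / q) N) :
    ∃ n : ℕ, N = (n : ℕ∞) ∧ 1 ≤ ε ^ n * ‖q‖ := by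

  obtain ⟨-, -, hBO, hB0, -⟩ := hadm
  set E : ℤ → ℂ := fun n => R.q n * (p / q) - R.p n with hE
  have hE0 : E 0 = -1 := by simp [hE, R.p_zero, R.q_zero]
  have hEm1 : E (-1) = p / q := by simp [hE, R.p_neg_one, R.q_neg_one]
  have hbneZ : ∀ k : ℕ, (k : ℕ∞) ≤ N → R.b (k : ℤ) ≠ 0 := by
    intro k hk
    match k with
    | 0 => rw [show ((0:ℕ):ℤ) = 0 by norm_num, R.b_zero]; exact one_ne_zero
    | (k+1) =>
      intro h0
      exact hB0 (h0 ▸ R.hb (k+1) (Nat.le_add_left 1 k) hk)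
  have key : ∀ n : ℕ, (n : ℕ∞) ≤ N →
      E n ≠ 0 ∧ ‖E n‖ ≤ ε ^ n ∧
      (1 ≤ n → E n = -((R.b n * R.zs ((n:ℤ)-1) - R.a n) / R.b ((n:ℤ)-1)) * E ((n:ℤ)-1)) := by
    intro n
    induction n with
    | zero =>
      intro _
      refine ⟨?_, ?_, by omega⟩
      · rw [show ((0:ℕ):ℤ) = 0 by norm_num, hE0]; norm_num
      · rw [show ((0:ℕ):ℤ) = 0 by norm_num, hE0]; simp
    | succ n ih =>
      intro hle
      have hle' : (n : ℕ∞) ≤ N := le_trans (by exact_mod_cast Nat.le_succ n) hle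
      obtain ⟨hEn_ne, hEn_le, hrel⟩ := ih hle'
      have h1n : 1 ≤ n + 1 := Nat.le_add_left 1 n
      have hc1 : ((n+1:ℕ):ℤ) - 1 = (n:ℤ) := by push_cast; ring
      have hc2 : ((n+1:ℕ):ℤ) - 2 = (n:ℤ) - 1 := by push_cast; ring
      have hbn : R.b (n:ℤ) ≠ 0 := hbneZ n hle'
      have hyne := R.hne (n+1) h1n hle
      rw [hc1] at hyne
      have hlin : E ((n+1:ℕ):ℤ) =
          (R.a ((n+1:ℕ):ℤ) * E (n:ℤ) + R.b ((n+1:ℕ):ℤ) * E ((n:ℤ)-1)) / R.b (n:ℤ) := by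
        simp only [hE]
        rw [R.hp (n+1) h1n hle, R.hq (n+1) h1n hle, hc1, hc2]
        field_simp
        ring
      have hrel' : E ((n+1:ℕ):ℤ) =
          -((R.b ((n+1:ℕ):ℤ) * R.zs (((n+1:ℕ):ℤ)-1) - R.a ((n+1:ℕ):ℤ)) / R.b (((n+1:ℕ):ℤ)-1))
            * E (((n+1:ℕ):ℤ)-1) := by
        rw [hc1]
        rcases Nat.eq_zero_or_pos n with rfl | hn1
        · rw [hlin]
          norm_num [R.b_zero, R.zs_zero, hE0, hEm1]
          ring
        · have hrelq := hrel hn1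
          have hyn' := R.hne n hn1 hle'
          have hbn1 : R.b ((n:ℤ)-1) ≠ 0 := by
            have hc3 : ((n-1:ℕ):ℤ) = (n:ℤ) - 1 := by
              push_cast [hn1]; ring
            have := hbneZ (n-1) (le_trans (by exact_mod_cast Nat.sub_le n 1) hle')
            rwa [hc3] at this
          have hzn := R.hz n hn1 hle'
          have hEm : E ((n:ℤ)-1) =
              -(R.b ((n:ℤ)-1) / (R.b (n:ℤ) * R.zs ((n:ℤ)-1) - R.a (n:ℤ))) * E (n:ℤ) := by
            rw [hrelq]
            field_simp
          rw [hlin, hEm, hzn]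
          field_simp
          ring
      have hrel'' : E ((n+1:ℕ):ℤ) =
          -((R.b ((n+1:ℕ):ℤ) * R.zs (n:ℤ) - R.a ((n+1:ℕ):ℤ)) / R.b (n:ℤ)) * E (n:ℤ) := by
        rw [hrel', hc1]
      have hcl := R.hclose (n+1) h1n hle
      rw [hc1] at hcl
      have hbpos : 0 < ‖R.b (n:ℤ)‖ := norm_pos_iff.mpr hbn
      have hdiv : ‖R.b ((n+1:ℕ):ℤ) * R.zs (n:ℤ) - R.a ((n+1:ℕ):ℤ)‖
          / ‖R.b (n:ℤ)‖ ≤ ε := by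
        rw [div_le_iff₀ hbpos]
        exact hcl
      have habs : ‖E ((n+1:ℕ):ℤ)‖ ≤ ε ^ (n+1) := by
        rw [hrel'', norm_mul, norm_neg, norm_div]
        calc ‖R.b ((n+1:ℕ):ℤ) * R.zs (n:ℤ) - R.a ((n+1:ℕ):ℤ)‖
              / ‖R.b (n:ℤ)‖ * ‖E (n:ℤ)‖
            ≤ ε * ε ^ n := by
              apply mul_le_mul hdiv hEn_le (norm_nonneg _) (le_of_lt hε0)
          _ = ε ^ (n+1) := by rw [pow_succ]; ring
      refine ⟨?_, habs, fun _ => hrel'⟩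
      rw [hrel'']
      exact mul_ne_zero (neg_ne_zero.mpr (div_ne_zero hyne hbn)) hEn_ne
  have keyA : ∀ n : ℕ, (n:ℕ∞) ≤ N → 1 ≤ ε ^ n * ‖q‖ := by
    intro n hn
    obtain ⟨hne, hle, -⟩ := key n hn
    have hmem : q * E (n:ℤ) ∈ O Δ := by
      have hqE : q * E (n:ℤ) = R.q (n:ℤ) * p - R.p (n:ℤ) * q := by
        simp only [hE]
        field_simp
      rw [hqE]
      rcases Nat.eq_zero_or_pos n with rfl | hn1
      · rw [show ((0:ℕ):ℤ) = 0 by norm_num, R.p_zero, R.q_zero]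
        simpa using (O Δ).neg_mem hq
      · exact sub_mem (mul_mem (R.hqO n hn1 hn) hp) (mul_mem (R.hpO n hn1 hn) hq)
    have h1 : 1 ≤ ‖q * E (n:ℤ)‖ :=
      abs_one_le Δ hΔneg hΔmod hmem (mul_ne_zero hq0 hne)
    rw [norm_mul] at h1
    calc (1:ℝ) ≤ ‖q‖ * ‖E (n:ℤ)‖ := h1
      _ ≤ ‖q‖ * ε ^ n :=
          mul_le_mul_of_nonneg_left hle (norm_nonneg q)
      _ = ε ^ n * ‖q‖ := mul_comm _ _
  have hqpos : 0 < ‖q‖ := norm_pos_iff.mpr hq0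
  have hfin : N ≠ ⊤ := by
    intro htop
    obtain ⟨n, hn⟩ := exists_pow_lt_of_lt_one (inv_pos.mpr hqpos) hε1
    have h := keyA n (htop ▸ le_top)
    have h2 : ε ^ n * ‖q‖ < 1 := by
      have := mul_lt_mul_of_pos_right hn hqpos
      rwa [inv_mul_cancel₀ (ne_of_gt hqpos)] at this
    linarith
  obtain ⟨m, hm⟩ := WithTop.ne_top_iff_exists.mp hfin
  exact ⟨m, hm.symm, keyA m hm.le⟩


end CFNE
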